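/- There exists a continuous 2-homogeneous polynomial P : c₀ → c₀ such that P(e₁ + e₂ + ⋯ + eₙ) = 0 for every n ∈ ℕ (so for the sequence (eₙ), which is equivalent to the c₀-basis, the sequence (P(∑_{i=1}^n e_i))ₙ is relatively compact), and yet for every sequence (xₙ) in c₀ equivalent to the c₀-basis, the sequence ‖P(xₙ)‖ does not converge to 0. One such polynomial is given by P(x) = ∑_{j=2}^∞ ∑_{i=1}^{j-1} (x(j) − x(i))·x(j)·e_{j²+i} for x = (x(i)) ∈ c₀. -/

import Mathlib

open Filter Topology Metric

noncomputable section

/-- The Banach space `c₀` of real sequences converging to zero, with the sup norm. -/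
abbrev c0 : Type := ZeroAtInftyContinuousMap ℕ ℝ

/-- The unit vector basis of `c₀`. -/
def e (n : ℕ) : c0 :=
  { toFun := fun i => if i = n then (1 : ℝ) else 0
    continuous_toFun := continuous_of_discreteTopology
    zero_at_infty' := by
      rw [Filter.cocompact_eq_cofinite]
      refine tendsto_const_nhds.congr' ?_
      have h : {n}ᶜ ∈ (Filter.cofinite : Filter ℕ) := by simp [Filter.cofinite]
      filter_upwards [h] with i hi
      simp only [Set.mem_compl_iff, Set.mem_singleton_iff] at hi
      simp [hi] }

/-- A series `∑ xₙ` is weakly unconditionally Cauchy (w.u.C.) if `∑ |φ (xₙ)| < ∞` for every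
continuous linear functional `φ`. -/
def WUC {X : Type*} [NormedAddCommGroup X] [NormedSpace ℝ X] (x : ℕ → X) : Prop :=
  ∀ φ : X →L[ℝ] ℝ, Summable fun n => |φ (x n)|

/-- A sequence is equivalent to the unit vector basis of `c₀`: there are `0 < c ≤ C` with
`c · maxᵢ |aᵢ| ≤ ‖∑ aᵢ xᵢ‖ ≤ C · maxᵢ |aᵢ|` for all finite scalar families. -/
def IsEquivC0Basis {X : Type*} [NormedAddCommGroup X] [NormedSpace ℝ X] (x : ℕ → X) : Prop :=
  ∃ c C : ℝ, 0 < c ∧ c ≤ C ∧ ∀ (n : ℕ) (a : ℕ → ℝ),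
    c * (⨆ i : Fin n, |a i|) ≤ ‖∑ i ∈ Finset.range n, a i • x i‖ ∧
    ‖∑ i ∈ Finset.range n, a i • x i‖ ≤ C * (⨆ i : Fin n, |a i|)

/-- A map (polynomial) is unconditionally converging if for every w.u.C. series `∑ xₙ` the
sequence of values at the partial sums converges in norm. -/
def UCPoly {X Y : Type*} [NormedAddCommGroup X] [NormedSpace ℝ X]
    [NormedAddCommGroup Y] [NormedSpace ℝ Y] (P : X → Y) : Prop :=
  ∀ x : ℕ → X, WUC x →
    ∃ L : Y, Tendsto (fun n => P (∑ i ∈ Finset.range n, x i)) atTop (𝓝 L)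

/-- An operator is unconditionally converging if it maps w.u.C. series to unconditionally
convergent series. -/
def UCOp {X Y : Type*} [NormedAddCommGroup X] [NormedSpace ℝ X]
    [NormedAddCommGroup Y] [NormedSpace ℝ Y] (T : X → Y) : Prop :=
  ∀ x : ℕ → X, WUC x → Summable fun n => T (x n)

/-- A map (polynomial or operator) is compact if the image of the closed unit ball is
relatively norm compact. -/
def CompactMap {X Y : Type*} [NormedAddCommGroup X] [NormedSpace ℝ X]
    [NormedAddCommGroup Y] [NormedSpace ℝ Y] (P : X → Y) : Prop :=
  IsCompact (closure (P '' Metric.closedBall 0 1))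

/-- A set is relatively weakly compact if its closure in the weak topology is compact. -/
def RelWeakCompact {Y : Type*} [NormedAddCommGroup Y] [NormedSpace ℝ Y] (s : Set Y) : Prop :=
  IsCompact (closure ((toWeakSpace ℝ Y) '' s))

/-- A WUC-set is the image of the closed unit ball of `c₀` under a bounded operator. -/
def IsWUCSet {X : Type*} [NormedAddCommGroup X] [NormedSpace ℝ X] (s : Set X) : Prop :=
  ∃ T : c0 →L[ℝ] X, s = ⇑T '' Metric.closedBall 0 1

lemma c0_apply_le_norm (f : c0) (n : ℕ) : |f n| ≤ ‖f‖ := by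
  rw [← ZeroAtInftyContinuousMap.norm_toBCF_eq_norm]
  exact f.toBCF.norm_coe_le_norm n

lemma c0_norm_le (f : c0) {C : ℝ} (hC : 0 ≤ C) (h : ∀ n, |f n| ≤ C) : ‖f‖ ≤ C := by
  rw [← ZeroAtInftyContinuousMap.norm_toBCF_eq_norm]
  exact BoundedContinuousFunction.norm_le hC |>.2 h

def evalAM (n : ℕ) : c0 →+ ℝ :=
  { toFun := fun f => f n, map_zero' := rfl, map_add' := fun _ _ => rfl }

lemma c0_sum_apply {ι : Type*} (s : Finset ι) (f : ι → c0) (n : ℕ) :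
    (∑ i ∈ s, f i) n = ∑ i ∈ s, f i n := map_sum (evalAM n) f s

lemma c0_smul_apply (r : ℝ) (f : c0) (n : ℕ) : (r • f) n = r * f n := rfl

lemma sqrt_encode {i j : ℕ} (h1 : 1 ≤ i) (h2 : i < j) : Nat.sqrt (j ^ 2 + i) = j := by
  have hle : j ≤ Nat.sqrt (j ^ 2 + i) := Nat.le_sqrt.2 (by nlinarith)
  have hlt : Nat.sqrt (j ^ 2 + i) < j + 1 := Nat.sqrt_lt.2 (by nlinarith)
  omega

def coeff (x y : c0) (n : ℕ) : ℝ :=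
  if 1 ≤ n - (Nat.sqrt n) ^ 2 ∧ n - (Nat.sqrt n) ^ 2 < Nat.sqrt n
  then (x (Nat.sqrt n) - x (n - (Nat.sqrt n) ^ 2)) * y (Nat.sqrt n) else 0

lemma coeff_encode (x y : c0) {i j : ℕ} (h1 : 1 ≤ i) (h2 : i < j) :
    coeff x y (j ^ 2 + i) = (x j - x i) * y j := by
  have hs := sqrt_encode h1 h2
  have : j ^ 2 + i - (Nat.sqrt (j ^ 2 + i)) ^ 2 = i := by rw [hs]; omega
  rw [coeff, hs]
  have h3 : j ^ 2 + i - j ^ 2 = i := by omega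
  rw [h3, if_pos ⟨h1, h2⟩]

lemma coeff_decode (x y : c0) {n : ℕ} (h : coeff x y n ≠ 0) :
    ∃ i j, 1 ≤ i ∧ i < j ∧ n = j ^ 2 + i := by
  rw [coeff] at h
  split_ifs at h with hc
  · refine ⟨n - (Nat.sqrt n) ^ 2, Nat.sqrt n, hc.1, hc.2, ?_⟩
    have : Nat.sqrt n ^ 2 ≤ n := Nat.sqrt_le' n
    omega
  · exact absurd rfl h

lemma abs_coeff_le (x y : c0) (n : ℕ) : |coeff x y n| ≤ 2 * ‖x‖ * ‖y‖ := by
  rw [coeff]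
  split_ifs with hc
  · rw [abs_mul]
    have h1 : |x (Nat.sqrt n) - x (n - Nat.sqrt n ^ 2)| ≤ 2 * ‖x‖ := by
      have := c0_apply_le_norm x (Nat.sqrt n)
      have := c0_apply_le_norm x (n - Nat.sqrt n ^ 2)
      calc |x (Nat.sqrt n) - x (n - Nat.sqrt n ^ 2)|
          ≤ |x (Nat.sqrt n)| + |x (n - Nat.sqrt n ^ 2)| := abs_sub _ _
        _ ≤ 2 * ‖x‖ := by linarith
    have h2 : |y (Nat.sqrt n)| ≤ ‖y‖ := c0_apply_le_norm y _
    have := abs_nonneg (y (Nat.sqrt n))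
    nlinarith [norm_nonneg x, norm_nonneg y]
  · simp; positivity

/-- If for some `δ > 0` the coefficient exceeds... the decoded index is small. -/
lemma coeff_zero_at_infty (x y : c0) :
    Tendsto (coeff x y) (cocompact ℕ) (𝓝 0) := by
  rw [Filter.cocompact_eq_cofinite, NormedAddCommGroup.tendsto_nhds_zero]
  intro ε hε
  set δ : ℝ := ε / (2 * ‖x‖ + 1) with hδ
  have hδpos : 0 < δ := by positivity
  have hy : Tendsto (⇑y) (cofinite) (𝓝 0) := by
    have := y.zero_at_infty'; rwa [Filter.cocompact_eq_cofinite] at this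
  have hyev : ∀ᶠ j in cofinite, |y j| < δ :=
    (NormedAddCommGroup.tendsto_nhds_zero.1 hy) δ hδpos
  rw [Filter.eventually_cofinite] at hyev ⊢
  -- bad set of j's is finite, bounded by J
  obtain ⟨J, hJ⟩ := hyev.bddAbove
  apply Set.Finite.subset (Set.finite_Iio ((J + 1) ^ 2 + 1))
  intro n hn
  simp only [Set.mem_setOf_eq, not_lt] at hn
  have hne : coeff x y n ≠ 0 := by
    intro h0; rw [h0] at hn; simp at hn; linarith
  obtain ⟨i, j, h1, h2, rfl⟩ := coeff_decode x y hne
  have hcv : coeff x y (j ^ 2 + i) = (x j - x i) * y j := coeff_encode x y h1 h2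
  have hyj : δ ≤ |y j| := by
    by_contra hyl
    push_neg at hyl
    have h1' : |x j - x i| ≤ 2 * ‖x‖ := by
      have := c0_apply_le_norm x j
      have := c0_apply_le_norm x i
      calc |x j - x i| ≤ |x j| + |x i| := abs_sub _ _
        _ ≤ 2 * ‖x‖ := by linarith
    have hb : |coeff x y (j ^ 2 + i)| ≤ 2 * ‖x‖ * |y j| := by
      rw [hcv, abs_mul]
      exact mul_le_mul_of_nonneg_right h1' (abs_nonneg _) |>.trans_eq rfl
    have hb2 : 2 * ‖x‖ * |y j| ≤ 2 * ‖x‖ * δ :=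
      mul_le_mul_of_nonneg_left hyl.le (by positivity)
    have hb3 : 2 * ‖x‖ * δ < ε := by
      rw [hδ, mul_div_assoc', div_lt_iff₀ (by positivity)]
      nlinarith [norm_nonneg x]
    rw [Real.norm_eq_abs] at hn
    linarith
  have hjJ : j ≤ J := hJ (by simpa using not_lt.2 hyj)
  simp only [Set.mem_Iio]
  nlinarith

def Bc0 (x y : c0) : c0 :=
  { toFun := coeff x y
    continuous_toFun := continuous_of_discreteTopology
    zero_at_infty' := coeff_zero_at_infty x y }

lemma Bc0_apply (x y : c0) (n : ℕ) : Bc0 x y n = coeff x y n := rfl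

lemma c0_ext {f g : c0} (h : ∀ n, f n = g n) : f = g := DFunLike.ext f g h

lemma Bc0_add_left (x x' y : c0) : Bc0 (x + x') y = Bc0 x y + Bc0 x' y := by
  apply c0_ext; intro n
  show coeff (x + x') y n = coeff x y n + coeff x' y n
  rw [coeff, coeff, coeff]
  split_ifs with hc
  · show ((x + x') _ - (x + x') _) * y _ = _
    rw [ZeroAtInftyContinuousMap.coe_add]
    simp only [Pi.add_apply]
    ring
  · ring

lemma Bc0_add_right (x y y' : c0) : Bc0 x (y + y') = Bc0 x y + Bc0 x y' := by
  apply c0_ext; intro n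
  show coeff x (y + y') n = coeff x y n + coeff x y' n
  rw [coeff, coeff, coeff]
  split_ifs with hc
  · show (x _ - x _) * (y + y') _ = _
    rw [ZeroAtInftyContinuousMap.coe_add]
    simp only [Pi.add_apply]
    ring
  · ring

lemma Bc0_smul_left (r : ℝ) (x y : c0) : Bc0 (r • x) y = r • Bc0 x y := by
  apply c0_ext; intro n
  show coeff (r • x) y n = r * coeff x y n
  rw [coeff, coeff]
  split_ifs with hc
  · show ((r • x) _ - (r • x) _) * y _ = _
    rw [ZeroAtInftyContinuousMap.coe_smul]
    simp only [Pi.smul_apply, smul_eq_mul]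
    ring
  · ring

lemma Bc0_smul_right (r : ℝ) (x y : c0) : Bc0 x (r • y) = r • Bc0 x y := by
  apply c0_ext; intro n
  show coeff x (r • y) n = r * coeff x y n
  rw [coeff, coeff]
  split_ifs with hc
  · show (x _ - x _) * (r • y) _ = _
    rw [ZeroAtInftyContinuousMap.coe_smul]
    simp only [Pi.smul_apply, smul_eq_mul]
    ring
  · ring

lemma Bc0_norm_le (x y : c0) : ‖Bc0 x y‖ ≤ 2 * ‖x‖ * ‖y‖ :=
  c0_norm_le _ (by positivity) (abs_coeff_le x y)

def Amap : ContinuousMultilinearMap ℝ (fun _ : Fin 2 => c0) c0 :=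
  MultilinearMap.mkContinuous
    { toFun := fun v => Bc0 (v 0) (v 1)
      map_update_add' := by
        intro dec v i a b
        fin_cases i <;>
          simp [Function.update, Bc0_add_left, Bc0_add_right]
      map_update_smul' := by
        intro dec v i r a
        fin_cases i <;>
          simp [Function.update, Bc0_smul_left, Bc0_smul_right] }
    2
    (by
      intro v
      calc ‖Bc0 (v 0) (v 1)‖ ≤ 2 * ‖v 0‖ * ‖v 1‖ := Bc0_norm_le _ _
        _ = 2 * ∏ i : Fin 2, ‖v i‖ := by
          rw [Fin.prod_univ_two]; ring)

lemma Amap_apply (x : c0) : (Amap fun _ => x) = Bc0 x x := by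
  rw [Amap]
  rfl

lemma e_apply (k n : ℕ) : e k n = if n = k then 1 else 0 := rfl

lemma double_sum_apply (x : c0) (F : Finset ℕ) (n : ℕ) :
    (∑ j ∈ F, ∑ i ∈ Finset.Ico 1 j, ((x j - x i) * x j) • e (j ^ 2 + i)) n =
    if 1 ≤ n - (Nat.sqrt n) ^ 2 ∧ n - (Nat.sqrt n) ^ 2 < Nat.sqrt n ∧ Nat.sqrt n ∈ F
    then coeff x x n else 0 := by
  have hsq : Nat.sqrt n ^ 2 ≤ n := Nat.sqrt_le' n
  rw [c0_sum_apply]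
  simp only [c0_sum_apply, c0_smul_apply, e_apply]
  set j0 := Nat.sqrt n with hj0
  set i0 := n - j0 ^ 2 with hi0
  by_cases h : 1 ≤ i0 ∧ i0 < j0 ∧ j0 ∈ F
  · rw [if_pos h]
    have hn : n = j0 ^ 2 + i0 := by omega
    rw [Finset.sum_eq_single j0]
    · rw [Finset.sum_eq_single i0]
      · rw [if_pos hn, mul_one]
        rw [coeff]
        rw [if_pos ⟨h.1, h.2.1⟩]
      · intro i hi hne
        rw [if_neg (by omega), mul_zero]
      · intro hi0
        exact absurd (Finset.mem_Ico.2 ⟨h.1, h.2.1⟩) hi0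
    · intro j hj hne
      apply Finset.sum_eq_zero
      intro i hi
      rw [Finset.mem_Ico] at hi
      have : n ≠ j ^ 2 + i := by
        intro hc
        have := sqrt_encode hi.1 hi.2
        rw [← hc] at this
        exact hne this.symm
      rw [if_neg this, mul_zero]
    · intro hj
      exact absurd h.2.2 hj
  · rw [if_neg h]
    apply Finset.sum_eq_zero
    intro j hj
    apply Finset.sum_eq_zero
    intro i hi
    rw [Finset.mem_Ico] at hi
    have : n ≠ j ^ 2 + i := by
      intro hc
      have hs := sqrt_encode hi.1 hi.2
      rw [← hc] at hs
      apply h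
      refine ⟨by rw [hi0, hj0, hs]; omega, by rw [hi0, hj0, hs]; omega, by rw [hj0, hs]; exact hj⟩
    rw [if_neg this, mul_zero]

lemma coeff_eq_zero_of_not (x y : c0) {n : ℕ}
    (h : ¬(1 ≤ n - (Nat.sqrt n) ^ 2 ∧ n - (Nat.sqrt n) ^ 2 < Nat.sqrt n)) :
    coeff x y n = 0 := by rw [coeff, if_neg h]

lemma abs_coeff_le' (x y : c0) (n : ℕ) : |coeff x y n| ≤ 2 * ‖x‖ * |y (Nat.sqrt n)| := by
  rw [coeff]
  split_ifs with hc
  · rw [abs_mul]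
    apply mul_le_mul_of_nonneg_right _ (abs_nonneg _)
    have := c0_apply_le_norm x (Nat.sqrt n)
    have := c0_apply_le_norm x (n - Nat.sqrt n ^ 2)
    calc |x (Nat.sqrt n) - x (n - Nat.sqrt n ^ 2)| ≤ _ + _ := abs_sub _ _
      _ ≤ 2 * ‖x‖ := by linarith
  · simp; positivity

lemma hasSum_B (x : c0) :
    HasSum (fun j => ∑ i ∈ Finset.Ico 1 j, ((x j - x i) * x j) • e (j ^ 2 + i)) (Bc0 x x) := by
  rw [HasSum, Metric.tendsto_nhds]
  intro ε hε
  set δ : ℝ := ε / (2 * ‖x‖ + 2) with hδ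
  have hδpos : 0 < δ := by positivity
  have hx : Tendsto (⇑x) cofinite (𝓝 0) := by
    have := x.zero_at_infty'; rwa [Filter.cocompact_eq_cofinite] at this
  have hxev : {j | ¬ |x j| < δ}.Finite := by
    have := (NormedAddCommGroup.tendsto_nhds_zero.1 hx) δ hδpos
    rwa [Filter.eventually_cofinite] at this
  refine Filter.eventually_atTop.2 ?_
  refine ⟨hxev.toFinset, fun F hF => ?_⟩
  rw [dist_eq_norm]
  have hb : ‖(∑ j ∈ F, ∑ i ∈ Finset.Ico 1 j, ((x j - x i) * x j) • e (j ^ 2 + i)) - Bc0 x x‖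
      ≤ 2 * ‖x‖ * δ := by
    apply c0_norm_le _ (by positivity)
    intro n
    rw [ZeroAtInftyContinuousMap.coe_sub, Pi.sub_apply, double_sum_apply, Bc0_apply]
    by_cases hc : 1 ≤ n - (Nat.sqrt n) ^ 2 ∧ n - (Nat.sqrt n) ^ 2 < Nat.sqrt n
    · by_cases hm : Nat.sqrt n ∈ F
      · rw [if_pos ⟨hc.1, hc.2, hm⟩, sub_self, abs_zero]; positivity
      · rw [if_neg (by tauto), zero_sub, abs_neg]
        have hnm : Nat.sqrt n ∉ hxev.toFinset := fun hmem => hm (hF hmem)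
        rw [Set.Finite.mem_toFinset, Set.mem_setOf_eq, not_not] at hnm
        calc |coeff x x n| ≤ 2 * ‖x‖ * |x (Nat.sqrt n)| := abs_coeff_le' x x n
          _ ≤ 2 * ‖x‖ * δ := mul_le_mul_of_nonneg_left hnm.le (by positivity)
    · rw [coeff_eq_zero_of_not x x hc, if_neg (by tauto), sub_zero, abs_zero]; positivity
  have : 2 * ‖x‖ * δ < ε := by
    rw [hδ, mul_div_assoc', div_lt_iff₀ (by positivity)]
    nlinarith [norm_nonneg x]
  calc _ ≤ 2 * ‖x‖ * δ := hb
    _ < ε := this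

lemma partial_sum_apply (n k : ℕ) :
    (∑ i ∈ Finset.Icc 1 n, e i) k = if k ∈ Finset.Icc 1 n then (1 : ℝ) else 0 := by
  rw [c0_sum_apply]
  simp only [e_apply]
  rw [Finset.sum_ite_eq (Finset.Icc 1 n) k (fun _ => (1:ℝ))]

lemma B_partial_sum_zero (n : ℕ) :
    Bc0 (∑ i ∈ Finset.Icc 1 n, e i) (∑ i ∈ Finset.Icc 1 n, e i) = 0 := by
  apply c0_ext
  intro m
  rw [Bc0_apply, coeff]
  split_ifs with hc
  · simp only [partial_sum_apply]
    simp only [Finset.mem_Icc]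
    by_cases hj : Nat.sqrt m ≤ n
    · have h1 : 1 ≤ Nat.sqrt m := by omega
      rw [if_pos ⟨h1, hj⟩, if_pos ⟨hc.1, by omega⟩]
      show (1 - 1) * 1 = (0 : c0) m
      norm_num
    · rw [if_neg (by omega)]
      show _ * 0 = (0 : c0) m
      rw [mul_zero]
      rfl
  · rfl

lemma norm_ge {x : ℕ → c0} {c : ℝ}
    (h : ∀ (n : ℕ) (a : ℕ → ℝ), c * (⨆ i : Fin n, |a i|)
      ≤ ‖∑ i ∈ Finset.range n, a i • x i‖) (m : ℕ) : c ≤ ‖x m‖ := by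
  set a : ℕ → ℝ := fun i => if i = m then 1 else 0 with ha
  have hsum : ∑ i ∈ Finset.range (m + 1), a i • x i = x m := by
    rw [Finset.sum_eq_single m]
    · simp [ha]
    · intro i hi hne; simp [ha, hne]
    · intro hm; exact absurd (Finset.mem_range.2 (Nat.lt_succ_self m)) hm
  have hsup : (⨆ i : Fin (m + 1), |a i|) = 1 := by
    apply le_antisymm
    · apply ciSup_le
      intro i
      by_cases hii : (i : ℕ) = m <;> simp [ha, hii]
    · have := le_ciSup (f := fun i : Fin (m + 1) => |a i|)
        (Set.Finite.bddAbove (Set.finite_range _)) ⟨m, Nat.lt_succ_self m⟩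
      simpa [ha] using this
  have := h (m + 1) a
  rw [hsum, hsup, mul_one] at this
  exact this

lemma coord_tendsto {x : ℕ → c0} {C : ℝ} (hC : 0 ≤ C)
    (h : ∀ (n : ℕ) (a : ℕ → ℝ), ‖∑ i ∈ Finset.range n, a i • x i‖
      ≤ C * (⨆ i : Fin n, |a i|)) (k : ℕ) :
    Tendsto (fun m => |x m k|) atTop (𝓝 0) := by
  set a : ℕ → ℝ := fun m => if 0 ≤ x m k then 1 else -1 with ha
  have key : ∀ N, ∑ m ∈ Finset.range N, |x m k| ≤ C := by
    intro N
    have h1 : (∑ m ∈ Finset.range N, a m • x m) k = ∑ m ∈ Finset.range N, |x m k| := by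
      rw [c0_sum_apply]
      apply Finset.sum_congr rfl
      intro m _
      rw [c0_smul_apply]
      show (if 0 ≤ x m k then (1:ℝ) else -1) * x m k = |x m k|
      split_ifs with hs
      · rw [one_mul, abs_of_nonneg hs]
      · push_neg at hs
        rw [abs_of_neg hs]; ring
    have h2 : |(∑ m ∈ Finset.range N, a m • x m) k| ≤ ‖∑ m ∈ Finset.range N, a m • x m‖ :=
      c0_apply_le_norm _ _
    have h3 : (⨆ i : Fin N, |a i|) ≤ 1 := by
      rcases Nat.eq_zero_or_pos N with hN | hN
      · subst hN
        rw [Real.iSup_of_isEmpty]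
        norm_num
      · haveI : Nonempty (Fin N) := ⟨⟨0, hN⟩⟩
        apply ciSup_le
        intro i
        show |if 0 ≤ x i k then (1:ℝ) else -1| ≤ 1
        split_ifs <;> norm_num
    have h4 := h N a
    have h5 : C * (⨆ i : Fin N, |a i|) ≤ C := by
      nlinarith
    calc ∑ m ∈ Finset.range N, |x m k| = |(∑ m ∈ Finset.range N, a m • x m) k| := by
          rw [h1, abs_of_nonneg (Finset.sum_nonneg fun _ _ => abs_nonneg _)]
      _ ≤ C := le_trans h2 (le_trans h4 h5)
  have hsm : Summable fun m => |x m k| :=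
    summable_of_sum_range_le (fun _ => abs_nonneg _) key
  exact hsm.tendsto_atTop_zero

lemma part3 (x : ℕ → c0) (hx : IsEquivC0Basis x) :
    ¬ Tendsto (fun n => ‖Amap fun _ => x n‖) atTop (𝓝 0) := by
  obtain ⟨c, C, hc, hcC, h⟩ := hx
  intro hT
  have h0 := coord_tendsto (le_trans hc.le hcC) (fun n a => (h n a).2) 0
  have h1 := coord_tendsto (le_trans hc.le hcC) (fun n a => (h n a).2) 1
  have e0 : ∀ᶠ m in atTop, |x m 0| < c / 4 := h0.eventually_lt_const (by positivity)
  have e1 : ∀ᶠ m in atTop, |x m 1| < c / 4 := h1.eventually_lt_const (by positivity)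
  have eA : ∀ᶠ m in atTop, ‖Amap fun _ => x m‖ < c ^ 2 / 8 :=
    hT.eventually_lt_const (by positivity)
  obtain ⟨m, hm0, hm1, hmA⟩ := (e0.and (e1.and eA)).exists
  have hnm : c ≤ ‖x m‖ := norm_ge (fun n a => (h n a).1) m
  have hj : ∃ j, c / 2 < |x m j| := by
    by_contra hcon
    push_neg at hcon
    have := c0_norm_le (x m) (by positivity) hcon
    linarith
  obtain ⟨j, hjv⟩ := hj
  match j, hjv with
  | 0, hjv => linarith
  | 1, hjv => linarith
  | (j + 2), hjv =>
    have henc : coeff (x m) (x m) ((j + 2) ^ 2 + 1) = (x m (j + 2) - x m 1) * x m (j + 2) :=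
      coeff_encode _ _ le_rfl (by omega)
    have hco : |coeff (x m) (x m) ((j + 2) ^ 2 + 1)| ≤ ‖Amap fun _ => x m‖ := by
      rw [Amap_apply]
      exact c0_apply_le_norm (Bc0 (x m) (x m)) _
    rw [henc, abs_mul] at hco
    have habs : |x m (j + 2)| - |x m 1| ≤ |x m (j + 2) - x m 1| := abs_sub_abs_le_abs_sub _ _
    nlinarith [abs_nonneg (x m (j + 2) - x m 1), abs_nonneg (x m 1)]

/-- There is a continuous 2-homogeneous polynomial `P : c₀ → c₀` vanishing at all the partial
sums `e₁ + ⋯ + eₙ`, while `‖P xₙ‖` does not tend to `0` for any sequence equivalent to the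
`c₀`-basis; one such is `P x = ∑_{j≥2} ∑_{1≤i<j} (x j − x i) (x j) e_{j²+i}`. -/
theorem exists_vanishing_on_partial_sums_norms_not_null :
    ∃ A : ContinuousMultilinearMap ℝ (fun _ : Fin 2 => c0) c0,
      (∀ x : c0, (A fun _ => x) =
        ∑' j : ℕ, ∑ i ∈ Finset.Ico 1 j, ((x j - x i) * x j) • e (j ^ 2 + i)) ∧
      (∀ n : ℕ, (A fun _ => ∑ i ∈ Finset.Icc 1 n, e i) = 0) ∧
      ∀ x : ℕ → c0, IsEquivC0Basis x →
        ¬ Tendsto (fun n => ‖A fun _ => x n‖) atTop (𝓝 0) := by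
  refine ⟨Amap, fun x => ?_, fun n => ?_, fun x hx => part3 x hx⟩
  · rw [Amap_apply]
    exact (hasSum_B x).tsum_eq.symm
  · rw [Amap_apply]
    exact B_partial_sum_zero n
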